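/- Let τ be an optimal transportation (minimizing the sum Σ τ(a,b)·d(a,b)² ) between probability measures μ_A, μ_B on a finite metric graph. If τ(a₁,b₁) > 0, τ(a₂,b₂) > 0, and the discrete midpoint sets of (a₁,b₁) and (a₂,b₂) intersect, then d(a₁,b₁) = d(a₂,b₂). -/

import Mathlib

open Finset

variable {V : Type*} [Fintype V]

/-- `τ` is a transportation from `μA` to `μB`. -/
def IsTransport (τ : V → V → ℝ) (μA μB : V → ℝ) : Prop :=
  (∀ a b, 0 ≤ τ a b) ∧ (∀ a, ∑ b, τ a b = μA a) ∧ (∀ b, ∑ a, τ a b = μB b)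

/-- Quadratic Wasserstein cost of `τ` with respect to distance `dist`. -/
noncomputable def cost2 (dist : V → V → ℕ) (τ : V → V → ℝ) : ℝ :=
  ∑ a, ∑ b, τ a b * ((dist a b : ℝ)) ^ 2

/-- `τ` is an optimal (W²-minimizing) transportation from `μA` to `μB`. -/
def IsOptimalTransport (dist : V → V → ℕ) (τ : V → V → ℝ) (μA μB : V → ℝ) : Prop :=
  IsTransport τ μA μB ∧
    ∀ τ' : V → V → ℝ, IsTransport τ' μA μB → cost2 dist τ ≤ cost2 dist τ'

/-- The discrete midpoint set `m̃(a,b)` of a graph `G`, encoded as a set of pairs: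
for even distance, diagonal pairs `(u,u)` with `2 d(u,a) = 2 d(u,b) = d(a,b)`;
for odd distance, edges `(u,v)` with `2 d(u,a) + 1 = 2 d(v,b) + 1 = d(a,b)`. -/
def mtil (G : SimpleGraph V) (a b : V) : Set (V × V) :=
  {p | (p.1 = p.2 ∧ 2 * G.dist p.1 a = G.dist a b ∧ 2 * G.dist p.1 b = G.dist a b) ∨
       (G.Adj p.1 p.2 ∧ 2 * G.dist p.1 a + 1 = G.dist a b ∧
        2 * G.dist p.2 b + 1 = G.dist a b)}

/-- Cyclic monotonicity for pairs: swapping two support pairs cannot decrease cost. -/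
lemma cyc_mono {dist : V → V → ℕ} {τ : V → V → ℝ} {μA μB : V → ℝ}
    (hopt : IsOptimalTransport dist τ μA μB) {a₁ b₁ a₂ b₂ : V}
    (h1 : 0 < τ a₁ b₁) (h2 : 0 < τ a₂ b₂) :
    ((dist a₁ b₁ : ℝ))^2 + ((dist a₂ b₂ : ℝ))^2 ≤
      ((dist a₁ b₂ : ℝ))^2 + ((dist a₂ b₁ : ℝ))^2 := by
  classical
  by_cases ha : a₁ = a₂
  · subst ha; linarith
  by_cases hb : b₁ = b₂
  · subst hb; linarith
  set ε := min (τ a₁ b₁) (τ a₂ b₂) with hε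
  have hε1 : ε ≤ τ a₁ b₁ := min_le_left _ _
  have hε2 : ε ≤ τ a₂ b₂ := min_le_right _ _
  have hεpos : 0 < ε := lt_min h1 h2
  set τ' : V → V → ℝ := fun a b => τ a b +
    ε * ((if a = a₁ then (1:ℝ) else 0) * (if b = b₂ then 1 else 0)
       + (if a = a₂ then (1:ℝ) else 0) * (if b = b₁ then 1 else 0)
       - (if a = a₁ then (1:ℝ) else 0) * (if b = b₁ then 1 else 0)
       - (if a = a₂ then (1:ℝ) else 0) * (if b = b₂ then 1 else 0)) with hτ'
  have htr : IsTransport τ' μA μB := by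
    refine ⟨?_, ?_, ?_⟩
    · intro a b
      have h0 := hopt.1.1 a b
      by_cases e1 : a = a₁ <;> by_cases e2 : a = a₂ <;>
        by_cases e3 : b = b₁ <;> by_cases e4 : b = b₂ <;>
        simp_all [hτ'] <;> linarith [le_min (hopt.1.1 a₁ b₁) (hopt.1.1 a₂ b₂)]
    · intro a
      have := hopt.1.2.1 a
      simp only [hτ']
      rw [Finset.sum_add_distrib, this, ← Finset.mul_sum]
      have : ∑ b, ((if a = a₁ then (1:ℝ) else 0) * (if b = b₂ then 1 else 0)
       + (if a = a₂ then (1:ℝ) else 0) * (if b = b₁ then 1 else 0)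
       - (if a = a₁ then (1:ℝ) else 0) * (if b = b₁ then 1 else 0)
       - (if a = a₂ then (1:ℝ) else 0) * (if b = b₂ then 1 else 0)) = 0 := by
        simp only [Finset.sum_sub_distrib, Finset.sum_add_distrib, ← Finset.mul_sum]
        simp
      rw [this]; ring
    · intro b
      have := hopt.1.2.2 b
      simp only [hτ']
      rw [Finset.sum_add_distrib, this, ← Finset.mul_sum]
      have : ∑ a, ((if a = a₁ then (1:ℝ) else 0) * (if b = b₂ then 1 else 0)
       + (if a = a₂ then (1:ℝ) else 0) * (if b = b₁ then 1 else 0)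
       - (if a = a₁ then (1:ℝ) else 0) * (if b = b₁ then 1 else 0)
       - (if a = a₂ then (1:ℝ) else 0) * (if b = b₂ then 1 else 0)) = 0 := by
        simp only [Finset.sum_sub_distrib, Finset.sum_add_distrib]
        simp [Finset.sum_ite_eq']
      rw [this]; ring
  have hcost : cost2 dist τ' = cost2 dist τ +
      ε * (((dist a₁ b₂ : ℝ))^2 + ((dist a₂ b₁ : ℝ))^2
          - ((dist a₁ b₁ : ℝ))^2 - ((dist a₂ b₂ : ℝ))^2) := by
    simp only [cost2, hτ']
    simp only [add_mul, sub_mul, mul_assoc, Finset.sum_add_distrib, Finset.sum_sub_distrib,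
      ← Finset.mul_sum]
    simp only [ite_mul, one_mul, zero_mul, mul_ite, mul_one, mul_zero]
    simp [Finset.sum_ite_eq', Finset.sum_sub_distrib, Finset.sum_add_distrib]
  have := hopt.2 τ' htr
  rw [hcost] at this
  nlinarith [hεpos]

/-- If `τ` is an optimal transportation between probability measures on a finite
connected graph, two support pairs whose midpoint sets intersect are at equal
distance. -/
theorem optimal_support_midpoints_same_dist (G : SimpleGraph V) (hG : G.Connected)
    (μA μB : V → ℝ) (hμA : ∑ a, μA a = 1) (hμB : ∑ b, μB b = 1)
    (τ : V → V → ℝ) (hopt : IsOptimalTransport G.dist τ μA μB)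
    (a₁ b₁ a₂ b₂ : V) (h1 : 0 < τ a₁ b₁) (h2 : 0 < τ a₂ b₂)
    (hm : (mtil G a₁ b₁ ∩ mtil G a₂ b₂).Nonempty) :
    G.dist a₁ b₁ = G.dist a₂ b₂ := by
  obtain ⟨⟨u, v⟩, hp1, hp2⟩ := hm
  have hc := cyc_mono hopt h1 h2
  have tri : ∀ x y z : V, (G.dist x z : ℝ) ≤ (G.dist x y : ℝ) + (G.dist y z : ℝ) := by
    intro x y z; exact_mod_cast hG.dist_triangle
  have comm : ∀ x y : V, (G.dist x y : ℝ) = (G.dist y x : ℝ) := by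
    intro x y; exact congrArg Nat.cast (SimpleGraph.dist_comm (G := G) (u := x) (v := y))
  have key : (G.dist a₁ b₁ : ℝ) = (G.dist a₂ b₂ : ℝ) := by
    rcases hp1 with ⟨huv, h1a, h1b⟩ | ⟨hadj, h1a, h1b⟩ <;>
      rcases hp2 with ⟨huv2, h2a, h2b⟩ | ⟨hadj2, h2a, h2b⟩
    · -- even / even
      simp only at huv h1a h1b h2a h2b
      have e1a : 2 * (G.dist u a₁ : ℝ) = G.dist a₁ b₁ := by exact_mod_cast h1a
      have e1b : 2 * (G.dist u b₁ : ℝ) = G.dist a₁ b₁ := by exact_mod_cast h1b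
      have e2a : 2 * (G.dist u a₂ : ℝ) = G.dist a₂ b₂ := by exact_mod_cast h2a
      have e2b : 2 * (G.dist u b₂ : ℝ) = G.dist a₂ b₂ := by exact_mod_cast h2b
      have t1 : (G.dist a₁ b₂ : ℝ) ≤ G.dist u a₁ + G.dist u b₂ := by
        have := tri a₁ u b₂; rw [comm a₁ u] at this; linarith
      have t2 : (G.dist a₂ b₁ : ℝ) ≤ G.dist u a₂ + G.dist u b₁ := by
        have := tri a₂ u b₁; rw [comm a₂ u] at this; linarith
      have hx : (0:ℝ) ≤ G.dist a₁ b₂ := by positivity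
      have hy : (0:ℝ) ≤ G.dist a₂ b₁ := by positivity
      have hsq : ((G.dist a₁ b₁ : ℝ) - G.dist a₂ b₂)^2 ≤ 0 := by nlinarith
      have := le_antisymm hsq (sq_nonneg _)
      have := sq_eq_zero_iff.mp this
      linarith
    · exact absurd huv hadj2.ne
    · exact absurd huv2 hadj.ne
    · -- odd / odd
      simp only at hadj h1a h1b h2a h2b
      have huv : (G.dist u v : ℝ) = 1 := by
        exact_mod_cast congrArg (Nat.cast : ℕ → ℝ)
          ((SimpleGraph.dist_eq_one_iff_adj).mpr hadj)
      have e1a : 2 * (G.dist u a₁ : ℝ) + 1 = G.dist a₁ b₁ := by exact_mod_cast h1a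
      have e1b : 2 * (G.dist v b₁ : ℝ) + 1 = G.dist a₁ b₁ := by exact_mod_cast h1b
      have e2a : 2 * (G.dist u a₂ : ℝ) + 1 = G.dist a₂ b₂ := by exact_mod_cast h2a
      have e2b : 2 * (G.dist v b₂ : ℝ) + 1 = G.dist a₂ b₂ := by exact_mod_cast h2b
      have t1 : (G.dist a₁ b₂ : ℝ) ≤ G.dist u a₁ + 1 + G.dist v b₂ := by
        have ha := tri a₁ u b₂
        have hb := tri u v b₂
        rw [comm a₁ u] at ha; rw [huv] at hb; linarith
      have t2 : (G.dist a₂ b₁ : ℝ) ≤ G.dist u a₂ + 1 + G.dist v b₁ := by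
        have ha := tri a₂ u b₁
        have hb := tri u v b₁
        rw [comm a₂ u] at ha; rw [huv] at hb; linarith
      have hx : (0:ℝ) ≤ G.dist a₁ b₂ := by positivity
      have hy : (0:ℝ) ≤ G.dist a₂ b₁ := by positivity
      have hsq : ((G.dist a₁ b₁ : ℝ) - G.dist a₂ b₂)^2 ≤ 0 := by nlinarith
      have := le_antisymm hsq (sq_nonneg _)
      have := sq_eq_zero_iff.mp this
      linarith
  exact_mod_cast key
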